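/- If a DAG G satisfies the sparsest Markov representation assumption with respect to a CI model, then G satisfies the P-minimality assumption: there is no Markov DAG G' whose set of d-separation statements strictly contains that of G. -/

import Mathlib

set_option maxHeartbeats 1000000


open scoped Classical

/-- A directed acyclic graph on `Fin p`: a finite edge set together with a
topological ordering witnessing acyclicity. -/
structure DAG (p : ℕ) where
  edges : Finset (Fin p × Fin p)
  acyclic : ∃ σ : Equiv.Perm (Fin p), ∀ e ∈ edges, σ.symm e.1 < σ.symm e.2

namespace DAG

variable {p : ℕ}

def edgeRel (G : DAG p) (a b : Fin p) : Prop := (a, b) ∈ G.edges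

/-- adjacency in the skeleton -/
def adj (G : DAG p) (a b : Fin p) : Prop := (a, b) ∈ G.edges ∨ (b, a) ∈ G.edges

/-- the skeleton as a finite set of unordered pairs -/
def skeleton (G : DAG p) : Finset (Sym2 (Fin p)) := G.edges.image (fun e => s(e.1, e.2))

/-- `b` is a collider on a path segment `a - b - c`. -/
def isCollider (G : DAG p) (a b c : Fin p) : Prop := (a, b) ∈ G.edges ∧ (c, b) ∈ G.edges

/-- `b` is in `S` or an ancestor of some element of `S`. -/
def ancestorOfSet (G : DAG p) (b : Fin p) (S : Finset (Fin p)) : Prop :=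
  ∃ s ∈ S, Relation.ReflTransGen G.edgeRel b s

/-- a (simple, undirected) path from `i` to `j` in the skeleton, as a list of vertices -/
def IsTrail (G : DAG p) (i j : Fin p) (l : List (Fin p)) : Prop :=
  l.Chain' G.adj ∧ l.Nodup ∧ 2 ≤ l.length ∧ l.head? = some i ∧ l.getLast? = some j

/-- the path `l` d-connects its endpoints given `S`: every collider on it is in `S` or
has a descendant in `S`, and every non-collider on it is not in `S`. -/
def dConnectsPath (G : DAG p) (S : Finset (Fin p)) (l : List (Fin p)) : Prop :=
  ∀ a b c : Fin p, [a, b, c] <:+: l →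
    (G.isCollider a b c → G.ancestorOfSet b S) ∧ (¬ G.isCollider a b c → b ∉ S)

def dConnected (G : DAG p) (i j : Fin p) (S : Finset (Fin p)) : Prop :=
  ∃ l : List (Fin p), G.IsTrail i j l ∧ G.dConnectsPath S l

def dSep (G : DAG p) (i j : Fin p) (S : Finset (Fin p)) : Prop :=
  i ≠ j ∧ ¬ G.dConnected i j S

end DAG

/-- A (pairwise) conditional independence model: `CI i j S` means
`X_i ⫫ X_j | X_S`. -/
abbrev CIModel (p : ℕ) := Fin p → Fin p → Finset (Fin p) → Prop

variable {p : ℕ}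

/-- `G` is Markov w.r.t. the CI model: every d-separation is a CI statement. -/
def Markov (G : DAG p) (CI : CIModel p) : Prop :=
  ∀ i j S, G.dSep i j S → CI i j S

/-- Markov equivalence: same d-separation statements. -/
def MarkovEquiv (G G' : DAG p) : Prop :=
  ∀ i j S, G.dSep i j S ↔ G'.dSep i j S

/-- `π` is a topological ordering of `G`. -/
def IsTopOrder (G : DAG p) (π : Equiv.Perm (Fin p)) : Prop :=
  ∀ e ∈ G.edges, π.symm e.1 < π.symm e.2

/-- the predecessors `{π 0, …, π (k-1)}` of position `k` in the ordering `π` -/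
def predSet (π : Equiv.Perm (Fin p)) (k : Fin p) : Finset (Fin p) :=
  (Finset.univ.filter (fun m => m < k)).image π

/-- The minimal I-map `G_π`: for `j < k` there is an edge `π j → π k` iff
`π j` and `π k` are conditionally dependent given all other predecessors of `π k`. -/
noncomputable def minimalIMap (CI : CIModel p) (π : Equiv.Perm (Fin p)) : DAG p where
  edges := Finset.univ.filter (fun q : Fin p × Fin p =>
    ∃ j k : Fin p, j < k ∧ q = (π j, π k) ∧ ¬ CI (π j) (π k) ((predSet π k).erase (π j)))
  acyclic := ⟨π, by
    intro e he
    rw [Finset.mem_filter] at he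
    obtain ⟨-, j, k, hjk, rfl, -⟩ := he
    simpa using hjk⟩

/-- the minimal number of edges of a minimal I-map `G_π` over all permutations `π` -/
noncomputable def spScore (CI : CIModel p) : ℕ :=
  ((Finset.univ : Finset (Equiv.Perm (Fin p))).image
    (fun π => (minimalIMap CI π).edges.card)).min' (Finset.univ_nonempty.image _)

/-- adjacency-faithfulness: endpoints of edges of `G` are conditionally dependent
given any conditioning set. -/
def AdjFaithful (G : DAG p) (CI : CIModel p) : Prop :=
  ∀ e ∈ G.edges, ∀ S : Finset (Fin p), e.1 ∉ S → e.2 ∉ S →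
    ¬ CI e.1 e.2 S ∧ ¬ CI e.2 e.1 S

/-- the sparsest Markov representation assumption -/
def SMR (G : DAG p) (CI : CIModel p) : Prop :=
  Markov G CI ∧
    ∀ G' : DAG p, Markov G' CI → ¬ MarkovEquiv G' G → G.edges.card < G'.edges.card

/-- the set of d-separation statements of `G` -/
def DsepSet (G : DAG p) : Set (Fin p × Fin p × Finset (Fin p)) :=
  {t | G.dSep t.1 t.2.1 t.2.2}

/-- P-minimality: no Markov DAG entails strictly more d-separations. -/
def PMinimal (G : DAG p) (CI : CIModel p) : Prop :=
  ∀ G' : DAG p, Markov G' CI → ¬ (DsepSet G ⊂ DsepSet G')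


section AuxLemmas

lemma DAG.ne_of_mem_edges (G : DAG p) {a b : Fin p} (h : (a, b) ∈ G.edges) : a ≠ b := by
  obtain ⟨σ, hσ⟩ := G.acyclic
  intro he
  subst he
  exact lt_irrefl _ (hσ _ h)

lemma triple_infix {α : Type*} (l : List α) (k : ℕ) (h : k + 2 < l.length) :
    [l[k], l[k+1], l[k+2]] <:+: l := by
  refine ⟨l.take k, l.drop (k+3), ?_⟩
  have key : [l[k], l[k+1], l[k+2]] ++ l.drop (k+3) = l.drop k := by
    rw [List.drop_eq_getElem_cons (show k < l.length by omega),
        List.drop_eq_getElem_cons (show k + 1 < l.length by omega),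
        List.drop_eq_getElem_cons (show k + 2 < l.length by omega)]
    simp [show k + 1 + 1 = k + 2 by omega, show k + 2 + 1 = k + 3 by omega]
  rw [List.append_assoc, key, List.take_append_drop]

lemma rtg_le (G : DAG p) (σ : Equiv.Perm (Fin p))
    (hσ : ∀ e ∈ G.edges, σ.symm e.1 < σ.symm e.2) {b s : Fin p}
    (h : Relation.ReflTransGen G.edgeRel b s) : σ.symm b ≤ σ.symm s := by
  induction h with
  | refl => exact le_refl _
  | tail h' e ih => exact ih.trans (le_of_lt (hσ _ e))

lemma DAG.dSep_symm (G : DAG p) {i j : Fin p} {S : Finset (Fin p)}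
    (h : G.dSep i j S) : G.dSep j i S := by
  obtain ⟨hne, hnc⟩ := h
  refine ⟨hne.symm, ?_⟩
  rintro ⟨l, ⟨hc, hnd, hlen, hhd, hlast⟩, hdc⟩
  refine hnc ⟨l.reverse, ⟨?_, ?_, ?_, ?_, ?_⟩, ?_⟩
  · show List.IsChain _ _
    rw [List.isChain_reverse]
    exact List.IsChain.imp (fun a b hab => Or.symm hab) hc
  · simpa using hnd
  · simpa using hlen
  · rw [List.head?_reverse]; exact hlast
  · rw [List.getLast?_reverse]; exact hhd
  · intro a b c htr
    rw [show [a, b, c] = [c, b, a].reverse from rfl, List.reverse_infix] at htr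
    have hd := hdc c b a htr
    constructor
    · intro hc'; exact hd.1 ⟨hc'.2, hc'.1⟩
    · intro hnc'; exact hd.2 (fun hc' => hnc' ⟨hc'.2, hc'.1⟩)

lemma dsep_of_lt (G : DAG p) (σ : Equiv.Perm (Fin p))
    (hσ : ∀ e ∈ G.edges, σ.symm e.1 < σ.symm e.2)
    {i j : Fin p} (hlt : σ.symm i < σ.symm j) (hadj : ¬ G.adj i j) :
    G.dSep i j (Finset.univ.filter fun k => σ.symm k < σ.symm j ∧ k ≠ i) := by
  have hS : ∀ k : Fin p,
      (k ∈ Finset.univ.filter fun k => σ.symm k < σ.symm j ∧ k ≠ i) ↔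
        σ.symm k < σ.symm j ∧ k ≠ i := by
    intro k; simp
  refine ⟨fun he => absurd hlt (by rw [he]; exact lt_irrefl _), ?_⟩
  rintro ⟨l, ⟨hc, hnd, hlen, hhd, hlast⟩, hdc⟩
  have hlen2 : 2 ≤ l.length := hlen
  have hnil : l ≠ [] := by intro h; rw [h] at hhd; simp at hhd
  have h0 : l[0]'(by omega) = i := by
    cases l with
    | nil => simp at hhd
    | cons x xs => simpa using hhd
  have hlastE : l[l.length - 1]'(by omega) = j := by
    rw [← l.getLast_eq_getElem hnil]
    rw [l.getLast?_eq_getLast hnil] at hlast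
    exact Option.some_injective _ hlast
  have hadjc : ∀ k, (hk : k + 1 < l.length) →
      G.adj (l[k]'(by omega)) (l[k+1]'(by omega)) := by
    intro k hk
    have := List.isChain_iff_getElem.1 hc k (by omega)
    simpa using this
  have hinj : ∀ k m, (hk : k < l.length) → (hm : m < l.length) →
      l[k] = l[m] → k = m := by
    intro k m hk hm hkm
    exact (hnd.getElem_inj_iff).1 hkm
  have hn3 : 3 ≤ l.length := by
    by_contra hcon
    have h2 : l.length = 2 := by omega
    have ha := hadjc 0 (by omega)
    rw [h0] at ha
    have h1j : l[1]'(by omega) = j := by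
      have := hlastE
      simp only [h2] at this
      exact this
    rw [h1j] at ha
    exact hadj ha
  -- max position index
  obtain ⟨K, hKmem, hKmax⟩ := Finset.exists_max_image (Finset.range l.length)
    (fun k => σ.symm (l.getD k i)) ⟨0, by simp; omega⟩
  rw [Finset.mem_range] at hKmem
  have hKmax' : ∀ k, (hk : k < l.length) →
      σ.symm (l[k]'(by omega)) ≤ σ.symm (l[K]'(by omega)) := by
    intro k hk
    have := hKmax k (Finset.mem_range.2 hk)
    rwa [List.getD_eq_getElem l i hk, List.getD_eq_getElem l i hKmem] at this
  have hKtop : K = l.length - 1 := by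
    by_contra hKne
    by_cases hK0 : K = 0
    · -- max at i, but j on trail with larger position
      have := hKmax' (l.length - 1) (by omega)
      rw [hlastE] at this
      simp only [hK0] at this
      rw [h0] at this
      exact absurd hlt (not_lt.2 this)
    · -- interior: collider at K, hence ancestor of S, position < j ≤ position K, contra
      have hK1 : 1 ≤ K := by omega
      have hK2 : K + 1 < l.length := by omega
      have htr := triple_infix l (K - 1) (by omega)
      simp only [show K - 1 + 1 = K from by omega,
        show K - 1 + 2 = K + 1 from by omega] at htr
      have ha1 : G.adj (l[K-1]'(by omega)) (l[K]'(by omega)) := by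
        have h' := hadjc (K - 1) (by omega)
        simpa only [show K - 1 + 1 = K from by omega] using h'
      have e1 : (l[K-1]'(by omega), l[K]'(by omega)) ∈ G.edges := by
        rcases ha1 with hE | hE
        · exact hE
        · exfalso
          have := hσ _ hE
          exact absurd (hKmax' (K-1) (by omega)) (not_le.2 this)
      have e2 : (l[K+1]'(by omega), l[K]'(by omega)) ∈ G.edges := by
        rcases hadjc K hK2 with hE | hE
        · exfalso
          have := hσ _ hE
          exact absurd (hKmax' (K+1) (by omega)) (not_le.2 this)
        · exact hE
      obtain ⟨s, hsS, hrt⟩ := (hdc _ _ _ htr).1 ⟨e1, e2⟩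
      have h1 := rtg_le G σ hσ hrt
      have h2 : σ.symm s < σ.symm j := ((hS s).1 hsS).1
      have h3 : σ.symm j ≤ σ.symm (l[K]'(by omega)) := by
        have := hKmax' (l.length - 1) (by omega)
        rwa [hlastE] at this
      exact lt_irrefl _ (lt_of_le_of_lt (h3.trans h1) h2)
  subst hKtop
  have hbound : ∀ k, (hk : k < l.length) → σ.symm (l[k]'hk) ≤ σ.symm j := by
    intro k hk
    have := hKmax' k hk
    rwa [hlastE] at this
  -- final triple at the end of the trail
  have htr := triple_infix l (l.length - 3) (by omega)
  simp only [show l.length - 3 + 1 = l.length - 2 from by omega,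
    show l.length - 3 + 2 = l.length - 1 from by omega] at htr
  rw [hlastE] at htr
  have hbi : l[l.length - 2]'(by omega) ≠ i := by
    intro hbe
    rw [← h0] at hbe
    have := hinj _ _ (by omega) (by omega) hbe
    omega
  have hbj : l[l.length - 2]'(by omega) ≠ j := by
    intro hbe
    rw [← hlastE] at hbe
    have := hinj _ _ (by omega) (by omega) hbe
    omega
  have hblt : σ.symm (l[l.length - 2]'(by omega)) < σ.symm j :=
    lt_of_le_of_ne (hbound _ (by omega)) (fun hh => hbj (σ.symm.injective hh))
  by_cases hcol : G.isCollider (l[l.length - 3]'(by omega)) (l[l.length - 2]'(by omega)) j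
  · exact absurd (hσ _ hcol.2) (not_lt.2 (le_of_lt hblt))
  · exact (hdc _ _ _ htr).2 hcol ((hS _).2 ⟨hblt, hbi⟩)

lemma exists_dsep_of_not_adj (G : DAG p) {i j : Fin p} (hij : i ≠ j)
    (hadj : ¬ G.adj i j) : ∃ S, G.dSep i j S := by
  obtain ⟨σ, hσ⟩ := G.acyclic
  have hne : σ.symm i ≠ σ.symm j := fun hh => hij (σ.symm.injective hh)
  rcases hne.lt_or_gt with hlt | hlt
  · exact ⟨_, dsep_of_lt G σ hσ hlt hadj⟩
  · exact ⟨_, DAG.dSep_symm G (dsep_of_lt G σ hσ hlt (fun ha => hadj (Or.symm ha)))⟩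

lemma not_dsep_of_edge (G : DAG p) {a b : Fin p} (h : (a, b) ∈ G.edges)
    (S : Finset (Fin p)) : ¬ G.dSep a b S := by
  rintro ⟨hne, hnc⟩
  apply hnc
  refine ⟨[a, b], ⟨?_, ?_, ?_, rfl, rfl⟩, ?_⟩
  · exact List.isChain_pair.2 (Or.inl h)
  · simp [G.ne_of_mem_edges h]
  · simp
  · intro x y z hinf
    have := hinf.length_le
    simp at this

end AuxLemmas

/-- If a DAG satisfies the sparsest Markov representation assumption with respect to
a CI model, then it satisfies the P-minimality assumption: there is no Markov DAG
whose set of d-separation statements strictly contains that of `G`. -/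
theorem SMR_implies_PMinimal (CI : CIModel p) (G : DAG p) (h : SMR G CI) :
    PMinimal G CI := by
  intro G' hM' hss
  have hsub : DsepSet G ⊆ DsepSet G' := hss.1
  have hne : ¬ MarkovEquiv G' G := by
    intro hme
    apply hss.2
    intro t ht
    exact (hme t.1 t.2.1 t.2.2).1 ht
  have hcard := h.2 G' hM' hne
  have hskel : ∀ e ∈ G'.edges, G.adj e.1 e.2 := by
    intro e he
    by_contra hna
    obtain ⟨S, hS⟩ := exists_dsep_of_not_adj G (G'.ne_of_mem_edges he) hna
    exact not_dsep_of_edge G' he S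
      (hsub (show (e.1, e.2, S) ∈ DsepSet G from hS))
  have hle : G'.edges.card ≤ G.edges.card := by
    obtain ⟨σ', hσ'⟩ := G'.acyclic
    have hinj : Set.InjOn (fun e : Fin p × Fin p => s(e.1, e.2)) G'.edges := by
      intro e he f hf hef
      simp only at hef
      rcases Sym2.eq_iff.1 hef with ⟨h1, h2⟩ | ⟨h1, h2⟩
      · exact Prod.ext h1 h2
      · exfalso
        have he' := hσ' e he
        have hf' := hσ' f hf
        rw [h1, h2] at he'
        exact lt_asymm he' hf'
    have hsubset : G'.edges.image (fun e : Fin p × Fin p => s(e.1, e.2)) ⊆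
        G.edges.image (fun e : Fin p × Fin p => s(e.1, e.2)) := by
      intro x hx
      obtain ⟨e, he, rfl⟩ := Finset.mem_image.1 hx
      rcases hskel e he with hE | hE
      · exact Finset.mem_image.2 ⟨(e.1, e.2), hE, rfl⟩
      · exact Finset.mem_image.2 ⟨(e.2, e.1), hE, Sym2.eq_swap⟩
    calc G'.edges.card
        = (G'.edges.image (fun e : Fin p × Fin p => s(e.1, e.2))).card :=
          (Finset.card_image_of_injOn hinj).symm
      _ ≤ (G.edges.image (fun e : Fin p × Fin p => s(e.1, e.2))).card :=
          Finset.card_le_card hsubset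
      _ ≤ G.edges.card := Finset.card_image_le
  omega
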